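/- Let f be a function from two-element subsets of ℕ to [0,1], let n ≠ m in ℕ, write h = α + δ·f(n,m), and set P_{n,m} = { x ∈ ℓ² : ‖x‖_{ℓ²} ≤ (1/√2)·h·(x_n + x_m) }. Then for every x ∈ ℓ² with ‖x‖_{ℓ²} = 1 one has x ∈ P_{n,m} if and only if ‖x − e_{n,m}‖_{ℓ²} ≤ √(2(h−1)/h); in particular, every x ∈ P_{n,m} with ‖x‖_{ℓ²} = 1 satisfies ‖x − e_{n,m}‖_{ℓ²} ≤ 1/10. -/

import Mathlib

/- Context: ℓ² with canonical vectors (e n); e_{n,m} = (e n + e m)/√2.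
Fix α, δ with 1 < α < α + δ ≤ 200/199.  For f with values in [0,1] and n ≠ m,
write h = α + δ·f(n,m) and P_{n,m} = { x ∈ ℓ² : ‖x‖_{ℓ²} ≤ (1/√2)·h·(x n + x m) }. -/

noncomputable section

abbrev ℓ2 : Type := lp (fun _ : ℕ => ℝ) 2

noncomputable def e (n : ℕ) : ℓ2 := lp.single 2 n 1

noncomputable def E (n m : ℕ) : ℓ2 := (Real.sqrt 2)⁻¹ • (e n + e m)

/-- The set `P_{n,m}` (for the value `h = α + δ·f(n,m)`). -/
def Pset (h : ℝ) (n m : ℕ) : Set ℓ2 :=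
  {x : ℓ2 | ‖x‖ ≤ (Real.sqrt 2)⁻¹ * h * (x n + x m)}

lemma inner_e (n : ℕ) (x : ℓ2) : (inner ℝ (e n) x : ℝ) = x n := by
  rw [e, lp.inner_single_left]; simp

lemma inner_E (n m : ℕ) (x : ℓ2) :
    (inner ℝ (E n m) x : ℝ) = (Real.sqrt 2)⁻¹ * (x n + x m) := by
  rw [E, inner_smul_left, inner_add_left, inner_e, inner_e]
  simp

lemma sqrt2_inv : (Real.sqrt 2)⁻¹ = Real.sqrt 2 / 2 := by
  have h2 : (Real.sqrt 2) * Real.sqrt 2 = 2 := Real.mul_self_sqrt (by norm_num)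
  have h2' : Real.sqrt 2 ≠ 0 := by positivity
  field_simp
  rw [sq, h2]

lemma norm_E (n m : ℕ) (hnm : n ≠ m) : ‖E n m‖ = 1 := by
  have h1 : (inner ℝ (E n m) (E n m) : ℝ) = 1 := by
    rw [inner_E]
    have hv : (E n m) n = (Real.sqrt 2)⁻¹ ∧ (E n m) m = (Real.sqrt 2)⁻¹ := by
      constructor <;>
      · simp only [E, e, lp.coeFn_smul, Pi.smul_apply, lp.coeFn_add, Pi.add_apply,
          lp.single_apply]
        simp [hnm, hnm.symm]
    rw [hv.1, hv.2]
    have h2 : (Real.sqrt 2) * Real.sqrt 2 = 2 := Real.mul_self_sqrt (by norm_num)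
    have h2' : Real.sqrt 2 ≠ 0 := by positivity
    field_simp
    rw [sq, h2]; norm_num
  have := real_inner_self_eq_norm_sq (E n m)
  nlinarith [norm_nonneg (E n m)]

lemma norm_sub_E_sq (n m : ℕ) (hnm : n ≠ m) (x : ℓ2) (hx : ‖x‖ = 1) :
    ‖x - E n m‖ ^ 2 = 2 - Real.sqrt 2 * (x n + x m) := by
  have key : ‖x - E n m‖ ^ 2 = ‖x‖ ^ 2 - 2 * (inner ℝ x (E n m) : ℝ) + ‖E n m‖ ^ 2 := by
    rw [norm_sub_sq_real]
  rw [key, hx, norm_E n m hnm, real_inner_comm, inner_E, sqrt2_inv]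
  ring

theorem stmt2 (α δ : ℝ) (hα : 1 < α) (hδ : α < α + δ) (hαδ : α + δ ≤ 200 / 199)
    (f : ℕ → ℕ → ℝ) (hf : ∀ n m : ℕ, n ≠ m → f n m ∈ Set.Icc (0 : ℝ) 1)
    (n m : ℕ) (hnm : n ≠ m) (h : ℝ) (hh : h = α + δ * f n m) :
    (∀ x : ℓ2, ‖x‖ = 1 →
      (x ∈ Pset h n m ↔ ‖x - E n m‖ ≤ Real.sqrt (2 * (h - 1) / h))) ∧
    (∀ x : ℓ2, ‖x‖ = 1 → x ∈ Pset h n m → ‖x - E n m‖ ≤ 1 / 10) := by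
  have hfnm := hf n m hnm
  have hδ0 : 0 < δ := by linarith
  have hh1 : 1 < h := by nlinarith [hfnm.1, hfnm.2]
  have hh2 : h ≤ 200 / 199 := by nlinarith [hfnm.1, hfnm.2]
  have hhpos : (0:ℝ) < h := by linarith
  have h2 : (Real.sqrt 2) * Real.sqrt 2 = 2 := Real.mul_self_sqrt (by norm_num)
  have hhq : 0 ≤ 2 * (h - 1) / h := div_nonneg (by linarith) (by linarith)
  have main : ∀ x : ℓ2, ‖x‖ = 1 →
      (x ∈ Pset h n m ↔ ‖x - E n m‖ ≤ Real.sqrt (2 * (h - 1) / h)) := by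
    intro x hx
    have hsq := norm_sub_E_sq n m hnm x hx
    constructor
    · intro hxP
      rw [Pset, Set.mem_setOf_eq, hx, sqrt2_inv] at hxP
      rw [← Real.sqrt_sq (norm_nonneg (x - E n m))]
      apply Real.sqrt_le_sqrt
      rw [hsq, le_div_iff₀ hhpos]
      linarith
    · intro hle
      have hle2 : ‖x - E n m‖ ^ 2 ≤ 2 * (h - 1) / h := by
        have h1 := mul_self_le_mul_self (norm_nonneg (x - E n m)) hle
        rw [Real.mul_self_sqrt hhq] at h1
        rw [pow_two]; exact h1
      rw [hsq, le_div_iff₀ hhpos] at hle2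
      rw [Pset, Set.mem_setOf_eq, hx, sqrt2_inv]
      linarith
  refine ⟨main, fun x hx hxP => ?_⟩
  have hle := (main x hx).mp hxP
  have hb : Real.sqrt (2 * (h - 1) / h) ≤ 1 / 10 := by
    have hsmall : 2 * (h - 1) / h ≤ 1 / 100 := by
      rw [div_le_iff₀ hhpos]
      nlinarith
    calc Real.sqrt (2 * (h - 1) / h) ≤ Real.sqrt (1 / 100) := Real.sqrt_le_sqrt hsmall
      _ = 1 / 10 := by
        rw [show (1:ℝ)/100 = (1/10)^2 by norm_num, Real.sqrt_sq (by norm_num)]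
  linarith
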